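/- Let C be a chain complex as in the context, let h ∈ H^i(C) be a torsion cohomology class, let p be a prime and m ≥ 1, and suppose the reduction of h modulo p^m is nonzero. Then there exist a chain c ∈ C_i and a cocycle φ ∈ C^i representing h such that ∂c ∈ p^m·C_{i−1} and φ(c) is not divisible by p^m. -/

import Mathlib

structure FreeChainComplex where
  ι : ℕ → Type
  fin : ∀ i, Fintype (ι i)
  bd : ∀ i, ((ι (i + 1) → ℤ) →+ (ι i → ℤ))
  bd_bd : ∀ i (x : ι (i + 2) → ℤ), bd i (bd (i + 1) x) = 0

namespace FreeChainComplex

variable (X : FreeChainComplex)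

abbrev Chain (i : ℕ) := X.ι i → ℤ

abbrev Cochain (i : ℕ) := (X.ι i → ℤ) →+ ℤ

/-- cochains with coefficients `ℤ/nℤ` -/
abbrev CochainMod (n i : ℕ) := (X.ι i → ℤ) →+ ZMod n

def bdFrom : ∀ i : ℕ, ((X.ι i → ℤ) →+ (X.ι (i - 1) → ℤ))
  | 0 => 0
  | (j + 1) => X.bd j

def cb (i : ℕ) : X.Cochain i →+ X.Cochain (i + 1) where
  toFun φ := φ.comp (X.bd i)
  map_zero' := by ext x; simp
  map_add' _ _ := by ext x; simp

def cbMod (n i : ℕ) : X.CochainMod n i →+ X.CochainMod n (i + 1) where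
  toFun φ := φ.comp (X.bd i)
  map_zero' := by ext x; simp
  map_add' _ _ := by ext x; simp

def cocycles (i : ℕ) : AddSubgroup (X.Cochain i) := (X.cb i).ker

def cobds : ∀ i : ℕ, AddSubgroup (X.Cochain i)
  | 0 => ⊥
  | (j + 1) => (X.cb j).range

abbrev H (i : ℕ) := X.cocycles i ⧸ (X.cobds i).addSubgroupOf (X.cocycles i)

def cls (i : ℕ) (φ : X.Cochain i) (h : φ ∈ X.cocycles i) : X.H i :=
  QuotientAddGroup.mk ⟨φ, h⟩

def cocyclesMod (n i : ℕ) : AddSubgroup (X.CochainMod n i) := (X.cbMod n i).ker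

def cobdsMod (n : ℕ) : ∀ i : ℕ, AddSubgroup (X.CochainMod n i)
  | 0 => ⊥
  | (j + 1) => (X.cbMod n j).range

/-- the `i`-th cohomology with coefficients `ℤ/nℤ` -/
abbrev Hmod (n i : ℕ) :=
  X.cocyclesMod n i ⧸ (X.cobdsMod n i).addSubgroupOf (X.cocyclesMod n i)

/-- reduction of integral cochains modulo `n`, induced by the quotient `ℤ → ℤ/nℤ` -/
def redCochain (n i : ℕ) : X.Cochain i →+ X.CochainMod n i where
  toFun φ := (Int.castAddHom (ZMod n)).comp φ
  map_zero' := by ext x; simp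
  map_add' _ _ := by ext x; simp

lemma red_cb (n i : ℕ) (φ : X.Cochain i) :
    X.redCochain n (i + 1) (X.cb i φ) = X.cbMod n i (X.redCochain n i φ) := by
  ext x; simp [redCochain, cb, cbMod]

/-- reduction modulo `n` on cocycles -/
def redZ (n i : ℕ) : ↥(X.cocycles i) →+ ↥(X.cocyclesMod n i) :=
  AddMonoidHom.codRestrict ((X.redCochain n i).comp (X.cocycles i).subtype)
    (X.cocyclesMod n i)
    (fun φ => by
      have hφ : X.cb i (φ : X.Cochain i) = 0 := φ.2
      simp only [cocyclesMod, AddMonoidHom.mem_ker, AddMonoidHom.coe_comp,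
        AddSubgroup.coe_subtype, Function.comp_apply]
      rw [← red_cb, hφ, map_zero])

lemma redZ_maps (n i : ℕ) :
    (X.cobds i).addSubgroupOf (X.cocycles i) ≤
      ((X.cobdsMod n i).addSubgroupOf (X.cocyclesMod n i)).comap (X.redZ n i) := by
  intro φ hφ
  simp only [AddSubgroup.mem_addSubgroupOf, AddSubgroup.mem_comap] at hφ ⊢
  cases i with
  | zero =>
      simp only [cobds, AddSubgroup.mem_bot] at hφ
      have : (X.redZ n 0 φ : X.CochainMod n 0) = X.redCochain n 0 (φ : X.Cochain 0) := rfl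
      simp only [cobdsMod, AddSubgroup.mem_bot, this, hφ, map_zero]
  | succ j =>
      obtain ⟨ψ, hψ⟩ := hφ
      refine ⟨X.redCochain n j ψ, ?_⟩
      have : (X.redZ n (j + 1) φ : X.CochainMod n (j + 1)) =
          X.redCochain n (j + 1) (φ : X.Cochain (j + 1)) := rfl
      rw [this, ← hψ, red_cb]

/-- the map induced on cohomology by the reduction `ℤ → ℤ/nℤ` -/
def redH (n i : ℕ) : X.H i →+ X.Hmod n i :=
  QuotientAddGroup.map _ _ (X.redZ n i) (X.redZ_maps n i)

end FreeChainComplex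


section AuxInjectivity

lemma zmod_val_cast {n : ℕ} [NeZero n] (a : ZMod n) : ((a.val : ℕ) : ZMod n) = a := by
  rw [ZMod.natCast_val, ZMod.cast_id]

lemma zmod_solve {n : ℕ} [NeZero n] (a v : ZMod n)
    (hv : ((n / Nat.gcd a.val n : ℕ) : ZMod n) * v = 0) : ∃ t : ZMod n, a * t = v := by
  set g := Nat.gcd a.val n with hg
  set d := n / g with hd
  have hgn : g ∣ n := Nat.gcd_dvd_right _ _
  have hnpos : 0 < n := NeZero.pos n
  have hgpos : 0 < g := Nat.gcd_pos_of_pos_right _ hnpos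
  have hnd : g * d = n := Nat.mul_div_cancel' hgn
  have hdpos : 0 < d := Nat.div_pos (Nat.le_of_dvd hnpos hgn) hgpos
  have h1 : ((d * v.val : ℕ) : ZMod n) = 0 := by
    rw [Nat.cast_mul, zmod_val_cast]
    exact hv
  have h2 : n ∣ d * v.val := (ZMod.natCast_eq_zero_iff _ n).mp h1
  have h3 : g ∣ v.val := by
    have h2' : g * d ∣ v.val * d := by rw [hnd, mul_comm v.val d]; exact h2
    exact (Nat.mul_dvd_mul_iff_right hdpos).mp h2'
  obtain ⟨c, hc⟩ := h3
  have hb : (g : ℤ) = (a.val : ℤ) * Int.gcdA a.val n + (n : ℤ) * Int.gcdB a.val n := by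
    have := Int.gcd_eq_gcd_ab (a.val : ℤ) (n : ℤ)
    rwa [Int.gcd_natCast_natCast] at this
  refine ⟨((Int.gcdA a.val n * c : ℤ) : ZMod n), ?_⟩
  have key : (a.val : ℤ) * (Int.gcdA a.val n * c) =
      (v.val : ℤ) + (n : ℤ) * (-(Int.gcdB a.val n * c)) := by
    have hc' : (v.val : ℤ) = (g : ℤ) * c := by exact_mod_cast congrArg (Nat.cast : ℕ → ℤ) hc
    linear_combination (-(c : ℤ)) * hb - hc'
  have step : a * ((Int.gcdA a.val n * c : ℤ) : ZMod n) =
      (((a.val : ℤ) * (Int.gcdA a.val n * c) : ℤ) : ZMod n) := by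
    push_cast [ZMod.natCast_val, ZMod.cast_id]
    ring
  rw [step, key, Int.cast_add, Int.cast_mul, Int.cast_natCast (n : ℕ),
    ZMod.natCast_self, zero_mul, add_zero, Int.cast_natCast, zmod_val_cast]

lemma zmod_baer (n : ℕ) [NeZero n] : Module.Baer (ZMod n) (ZMod n) := by
  haveI : IsPrincipalIdealRing (ZMod n) :=
    IsPrincipalIdealRing.of_surjective (Int.castRingHom (ZMod n)) ZMod.intCast_surjective
  intro I gI
  obtain ⟨a, rfl⟩ := (IsPrincipalIdealRing.principal I).principal
  have haI : a ∈ Ideal.span {a} := Ideal.mem_span_singleton_self a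
  set v := gI ⟨a, haI⟩ with hv
  have hcond : ((n / Nat.gcd a.val n : ℕ) : ZMod n) * v = 0 := by
    set d := n / Nat.gcd a.val n with hd
    have hnd : Nat.gcd a.val n * d = n := Nat.mul_div_cancel' (Nat.gcd_dvd_right _ _)
    have hA : ((d : ℕ) : ZMod n) • (⟨a, haI⟩ : Ideal.span {a}) = 0 := by
      apply Subtype.ext
      have h0 : ((d : ℕ) : ZMod n) * a = 0 := by
        rw [← zmod_val_cast a, ← Nat.cast_mul, ZMod.natCast_eq_zero_iff]
        obtain ⟨e, he⟩ := Nat.gcd_dvd_left a.val n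
        refine ⟨e, ?_⟩
        rw [he]
        have hre : d * (a.val.gcd n * e) = (a.val.gcd n * d) * e := by ring
        rw [hre, hnd]
      simpa [smul_eq_mul] using h0
    calc ((d : ℕ) : ZMod n) * v = gI (((d : ℕ) : ZMod n) • ⟨a, haI⟩) := by
          rw [map_smul, hv, smul_eq_mul]
      _ = 0 := by rw [hA, map_zero]
  obtain ⟨t, ht⟩ := zmod_solve a v hcond
  refine ⟨LinearMap.toSpanSingleton (ZMod n) (ZMod n) t, ?_⟩
  intro x hx
  obtain ⟨c, rfl⟩ := Ideal.mem_span_singleton'.mp hx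
  have hmem : (⟨c * a, hx⟩ : Ideal.span {a}) = c • ⟨a, haI⟩ := Subtype.ext (by simp)
  rw [hmem, map_smul]
  simp only [LinearMap.toSpanSingleton_apply, smul_eq_mul]
  rw [← hv, ← ht]
  ring

/-- coordinatewise reduction of integer chains mod `n` -/
def piCast (n : ℕ) (α : Type) : (α → ℤ) →+ (α → ZMod n) where
  toFun w := fun c => ((w c : ℤ) : ZMod n)
  map_zero' := by funext c; simp
  map_add' w1 w2 := by funext c; simp

/-- an additive functional vanishing (mod `n`) on mod-`n` "cycles" factors through the
boundary map, with values in `ZMod n`. -/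
lemma extend_functional (n : ℕ) [NeZero n] {A B : Type} (bd : (A → ℤ) →+ (B → ℤ))
    (φ : (A → ℤ) →+ ℤ)
    (hvan : ∀ x y : A → ℤ, piCast n B (bd x) = piCast n B (bd y) →
      ((φ x : ℤ) : ZMod n) = ((φ y : ℤ) : ZMod n)) :
    ∃ ψ : (B → ℤ) →+ ZMod n, ∀ x, ψ (bd x) = ((φ x : ℤ) : ZMod n) := by
  classical
  let R : Submodule (ZMod n) (B → ZMod n) :=
    { carrier := {y | ∃ x, piCast n B (bd x) = y}
      add_mem' := by
        rintro a b ⟨x1, rfl⟩ ⟨x2, rfl⟩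
        exact ⟨x1 + x2, by rw [map_add, map_add]⟩
      zero_mem' := ⟨0, by rw [map_zero, map_zero]⟩
      smul_mem' := by
        rintro z y ⟨x, rfl⟩
        obtain ⟨k, rfl⟩ := ZMod.intCast_surjective z
        refine ⟨k • x, ?_⟩
        rw [map_zsmul, map_zsmul, Int.cast_smul_eq_zsmul] }
  have hmem : ∀ x, piCast n B (bd x) ∈ R := fun x => ⟨x, rfl⟩
  have hkey : ∀ (y : ↥R) (x : A → ℤ), piCast n B (bd x) = (y : B → ZMod n) →
      ((φ (Exists.choose y.2) : ℤ) : ZMod n) = ((φ x : ℤ) : ZMod n) :=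
    fun y x hx => hvan _ _ ((Exists.choose_spec y.2).trans hx.symm)
  let f : ↥R →ₗ[ZMod n] ZMod n :=
    { toFun := fun y => ((φ (Exists.choose y.2) : ℤ) : ZMod n)
      map_add' := by
        rintro ⟨y1, hy1⟩ ⟨y2, hy2⟩
        obtain ⟨x1, hx1⟩ := id hy1
        obtain ⟨x2, hx2⟩ := id hy2
        have hsum : piCast n B (bd (x1 + x2)) =
            ((⟨y1, hy1⟩ + ⟨y2, hy2⟩ : ↥R) : B → ZMod n) := by
          rw [map_add, map_add, hx1, hx2]
          rfl
        have e12 := hkey (⟨y1, hy1⟩ + ⟨y2, hy2⟩) (x1 + x2) hsum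
        have e1 := hkey ⟨y1, hy1⟩ x1 hx1
        have e2 := hkey ⟨y2, hy2⟩ x2 hx2
        exact e12.trans (by rw [map_add, Int.cast_add, ← e1, ← e2])
      map_smul' := by
        intro z y
        obtain ⟨k, rfl⟩ := ZMod.intCast_surjective z
        obtain ⟨x, hx⟩ := id y.2
        have hsm : piCast n B (bd (k • x)) =
            ((((k : ℤ) : ZMod n) • y : ↥R) : B → ZMod n) := by
          rw [map_zsmul, map_zsmul, hx]
          show (k • (y : B → ZMod n)) = ((k : ℤ) : ZMod n) • (y : B → ZMod n)
          rw [Int.cast_smul_eq_zsmul]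
        have es := hkey ((((k : ℤ) : ZMod n)) • y) (k • x) hsm
        have e := hkey y x hx
        exact es.trans (by
          rw [map_zsmul, zsmul_eq_mul, Int.cast_mul, ← e]
          simp [smul_eq_mul]) }
  obtain ⟨F, hF⟩ := Module.Baer.extension_property (zmod_baer n) R.subtype
    (Submodule.injective_subtype R) f
  refine ⟨{ toFun := fun w => F (piCast n B w)
            map_zero' := by
              show F (piCast n B 0) = 0
              rw [map_zero, map_zero]
            map_add' := fun a b => by
              show F (piCast n B (a + b)) = F (piCast n B a) + F (piCast n B b)
              rw [map_add, map_add] }, ?_⟩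
  intro x
  have h1 : F (R.subtype ⟨piCast n B (bd x), hmem x⟩) = f ⟨piCast n B (bd x), hmem x⟩ :=
    LinearMap.congr_fun hF _
  exact h1.trans (hkey _ x rfl)

end AuxInjectivity

/-- **Certificate with modulus `p^m`.**
Let `C` be a chain complex of finitely generated free abelian groups in nonnegative
degrees, let `h ∈ H^i(C)` be a torsion cohomology class, let `p` be a prime and `m ≥ 1`,
and suppose the reduction of `h` modulo `p^m` is nonzero.  Then there exist a chain
`c ∈ C_i` and a cocycle `φ ∈ C^i` representing `h` such that `∂c ∈ p^m·C_{i−1}` and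
`φ(c)` is not divisible by `p^m`. -/
theorem certificate_with_prime_power_modulus
    (X : FreeChainComplex) (i : ℕ) (h : X.H i)
    (htor : ∃ k : ℕ, 1 ≤ k ∧ k • h = 0)
    (p m : ℕ) (hp : p.Prime) (hm : 1 ≤ m)
    (hred : X.redH (p ^ m) i h ≠ 0) :
    ∃ (c : X.Chain i) (φ : X.Cochain i) (hφ : φ ∈ X.cocycles i),
      X.cls i φ hφ = h ∧
      (∃ c' : X.Chain (i - 1), X.bdFrom i c = ((p : ℤ) ^ m) • c') ∧
      ¬ (((p : ℤ) ^ m) ∣ φ c) := by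
  classical
  haveI : NeZero (p ^ m) := ⟨pow_ne_zero m hp.ne_zero⟩
  have hcast : ((p ^ m : ℕ) : ℤ) = (p : ℤ) ^ m := by push_cast; ring
  obtain ⟨⟨φ, hφ⟩, rfl⟩ :=
    QuotientAddGroup.mk'_surjective ((X.cobds i).addSubgroupOf (X.cocycles i)) h
  obtain _ | j := i
  · -- degree 0
    have hmem : X.redCochain (p ^ m) 0 φ ≠ 0 := by
      intro h0
      apply hred
      have hrw : X.redH (p ^ m) 0 (QuotientAddGroup.mk' _ ⟨φ, hφ⟩) =
          QuotientAddGroup.mk (X.redZ (p ^ m) 0 ⟨φ, hφ⟩) := rfl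
      rw [hrw, QuotientAddGroup.eq_zero_iff, AddSubgroup.mem_addSubgroupOf]
      show X.redCochain (p ^ m) 0 φ ∈ X.cobdsMod (p ^ m) 0
      rw [h0]
      exact AddSubgroup.zero_mem _
    have hex : ∃ c : X.Chain 0, ((φ c : ℤ) : ZMod (p ^ m)) ≠ 0 := by
      by_contra hall
      push_neg at hall
      exact hmem (AddMonoidHom.ext fun c => hall c)
    obtain ⟨c, hc⟩ := hex
    refine ⟨c, φ, hφ, rfl, ⟨0, by simp [FreeChainComplex.bdFrom]⟩, ?_⟩
    intro hdvd
    rw [← hcast] at hdvd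
    exact hc ((ZMod.intCast_zmod_eq_zero_iff_dvd _ _).mpr hdvd)
  · -- degree j + 1
    by_cases hcert : ∃ c : X.Chain (j + 1),
        (∃ c' : X.Chain j, X.bdFrom (j + 1) c = ((p : ℤ) ^ m) • c') ∧
        ¬ (((p : ℤ) ^ m) ∣ φ c)
    · obtain ⟨c, hc1, hc2⟩ := hcert
      exact ⟨c, φ, hφ, rfl, hc1, hc2⟩
    · exfalso
      push_neg at hcert
      have hvan : ∀ x y : X.Chain (j + 1),
          piCast (p ^ m) (X.ι j) (X.bd j x) = piCast (p ^ m) (X.ι j) (X.bd j y) →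
          ((φ x : ℤ) : ZMod (p ^ m)) = ((φ y : ℤ) : ZMod (p ^ m)) := by
        intro x y hxy
        have hzc : ∀ c0, ((p : ℤ) ^ m) ∣ (X.bd j (x - y)) c0 := by
          intro c0
          have h0 : (((X.bd j (x - y)) c0 : ℤ) : ZMod (p ^ m)) = 0 := by
            rw [map_sub]
            show ((X.bd j x c0 - X.bd j y c0 : ℤ) : ZMod (p ^ m)) = 0
            rw [Int.cast_sub,
              show ((X.bd j x c0 : ℤ) : ZMod (p ^ m)) = ((X.bd j y c0 : ℤ) : ZMod (p ^ m))
                from congrFun hxy c0,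
              sub_self]
          rw [ZMod.intCast_zmod_eq_zero_iff_dvd, hcast] at h0
          exact h0
        have hdc : ((p : ℤ) ^ m) ∣ φ (x - y) := by
          refine hcert (x - y) ⟨fun c0 => (X.bd j (x - y)) c0 / ((p : ℤ) ^ m), ?_⟩
          show X.bd j (x - y) = ((p : ℤ) ^ m) • fun c0 => (X.bd j (x - y)) c0 / ((p : ℤ) ^ m)
          funext c0
          rw [Pi.smul_apply, smul_eq_mul]
          exact (Int.mul_ediv_cancel' (hzc c0)).symm
        have h1 : ((φ (x - y) : ℤ) : ZMod (p ^ m)) = 0 := by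
          rw [ZMod.intCast_zmod_eq_zero_iff_dvd, hcast]
          exact hdc
        rw [map_sub, Int.cast_sub, sub_eq_zero] at h1
        exact h1
      obtain ⟨ψ, hψ⟩ := extend_functional (p ^ m) (X.bd j) φ hvan
      apply hred
      have hrw : X.redH (p ^ m) (j + 1) (QuotientAddGroup.mk' _ ⟨φ, hφ⟩) =
          QuotientAddGroup.mk (X.redZ (p ^ m) (j + 1) ⟨φ, hφ⟩) := rfl
      rw [hrw, QuotientAddGroup.eq_zero_iff, AddSubgroup.mem_addSubgroupOf]
      show (X.redZ (p ^ m) (j + 1) ⟨φ, hφ⟩ : X.CochainMod (p ^ m) (j + 1)) ∈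
        (X.cbMod (p ^ m) j).range
      rw [AddMonoidHom.mem_range]
      exact ⟨ψ, AddMonoidHom.ext fun x => hψ x⟩
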